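/- Let A be a linearly topologized vector space over a discrete field k and A* its topological dual with the dual topology. Then the evaluation map ev : A × A* → k, (a, f) ↦ f(a), is continuous as a map from the product topology if and only if A is a Tate vector space. -/

import Mathlib

open Filter Topology

/-- A linearly topologized vector space over a discrete field `k`: the neighborhood
filter of `0` has a basis consisting of open linear subspaces. -/
def IsLinearlyTopologized (k V : Type*) [Field k] [AddCommGroup V] [Module k V]
    [TopologicalSpace V] : Prop :=
  (nhds (0 : V)).HasBasis (fun U : Submodule k V => IsOpen (U : Set V))
    (fun U => (U : Set V))

/-- `L` is linearly bounded if `L/(L ∩ U)` is finite dimensional for every open linear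
subspace `U`. -/
def LinearlyBounded (k : Type*) {V : Type*} [Field k] [AddCommGroup V] [Module k V]
    [TopologicalSpace V] (L : Submodule k V) : Prop :=
  ∀ U : Submodule k V, IsOpen (U : Set V) →
    FiniteDimensional k (↥L ⧸ (U.comap L.subtype))

/-- A linear subspace is linearly compact if it is closed, complete with respect to the
induced uniformity, and linearly bounded. -/
def LinearlyCompact (k : Type*) {V : Type*} [Field k] [AddCommGroup V] [Module k V]
    [UniformSpace V] (L : Submodule k V) : Prop :=
  IsClosed (L : Set V) ∧ IsComplete (L : Set V) ∧ LinearlyBounded k L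

/-- The compact-open topology on the space `A →L[k] B` of continuous linear maps: the
neighborhood filter of `0` has as basis the subspaces
`S_{K,W} = {f | f(K) ⊆ W}` for `K ⊆ A` linearly compact and `W ⊆ B` open linear. -/
def IsCompactOpenTopology (k : Type*) {A B : Type*} [Field k] [TopologicalSpace k]
    [AddCommGroup A] [Module k A] [UniformSpace A]
    [AddCommGroup B] [Module k B] [TopologicalSpace B]
    [TopologicalSpace (A →L[k] B)] : Prop :=
  (nhds (0 : A →L[k] B)).HasBasis
    (fun p : Submodule k A × Submodule k B =>
      LinearlyCompact k p.1 ∧ IsOpen ((p.2 : Set B)))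
    (fun p => {f : A →L[k] B | ∀ x ∈ p.1, f x ∈ p.2})

/-- A linearly topologized vector space is a Tate vector space if it is complete and
admits a c-lattice, i.e. an open linearly compact linear subspace. -/
def IsTate (k V : Type*) [Field k] [AddCommGroup V] [Module k V] [UniformSpace V] : Prop :=
  CompleteSpace V ∧ ∃ L : Submodule k V, IsOpen (L : Set V) ∧ LinearlyCompact k L

/-- The dual topology on the topological dual `A →L[k] k`: the neighborhood filter of
`0` has as basis the annihilators of linearly compact subspaces of `A`. -/
def IsDualTopology (k : Type*) {A : Type*} [Field k] [TopologicalSpace k]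
    [AddCommGroup A] [Module k A] [UniformSpace A]
    [TopologicalSpace (A →L[k] k)] : Prop :=
  (nhds (0 : A →L[k] k)).HasBasis (fun L : Submodule k A => LinearlyCompact k L)
    (fun L => {f : A →L[k] k | ∀ x ∈ L, f x = 0})

section Aux

variable {k : Type*} [Field k] [TopologicalSpace k] [DiscreteTopology k]
  {A : Type*} [AddCommGroup A] [Module k A] [UniformSpace A]
  [IsUniformAddGroup A] [ContinuousSMul k A] [T2Space A]

/-- A closed subset of a complete set is complete. -/
lemma isComplete_of_isClosed_subset {s t : Set A} (hs : IsComplete s) (ht : IsClosed t)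
    (hts : t ⊆ s) : IsComplete t := by
  intro f hf hft
  obtain ⟨x, hxs, hfx⟩ := hs f hf (hft.trans (Filter.principal_mono.2 hts))
  refine ⟨x, ?_, hfx⟩
  have : ClusterPt x (Filter.principal t) := by
    have : f.NeBot := hf.1
    exact (this.mono (le_inf hfx hft)).mono le_rfl
  simpa [ht.closure_eq] using mem_closure_iff_clusterPt.2 this

/-- In a Hausdorff linearly topologized space, the span of a single vector is
linearly compact. -/
lemma linearlyCompact_span_singleton (hA : IsLinearlyTopologized k A) (a : A) :
    LinearlyCompact k (Submodule.span k {a}) := by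
  set S := Submodule.span k {a} with hS
  -- find an open submodule meeting `S` trivially
  obtain ⟨W, hWopen, hSW⟩ : ∃ W : Submodule k A, IsOpen (W : Set A) ∧ S ⊓ W = ⊥ := by
    by_cases h : a = 0
    · obtain ⟨W, hWopen, -⟩ := hA.mem_iff.mp (Filter.univ_mem (f := nhds (0 : A)))
      exact ⟨W, hWopen, by simp [hS, h]⟩
    · have hmem : ({a}ᶜ : Set A) ∈ nhds (0 : A) :=
        (isOpen_compl_singleton).mem_nhds (by simpa using (Ne.symm h))
      obtain ⟨W, hWopen, hWsub⟩ := hA.mem_iff.mp hmem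
      refine ⟨W, hWopen, ?_⟩
      rw [eq_bot_iff]
      rintro x ⟨hxS, hxW⟩
      obtain ⟨c, rfl⟩ := Submodule.mem_span_singleton.mp hxS
      rcases eq_or_ne c 0 with rfl | hc
      · simp
      · exfalso
        have : a ∈ W := by
          have := W.smul_mem c⁻¹ hxW
          rwa [inv_smul_smul₀ hc] at this
        exact hWsub this rfl
  have hcomplete : IsComplete (S : Set A) := by
    intro f hf hfS
    have hV : {p : A × A | p.2 - p.1 ∈ W} ∈ uniformity A := by
      rw [uniformity_eq_comap_nhds_zero A]
      exact Filter.preimage_mem_comap (hWopen.mem_nhds W.zero_mem)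
    obtain ⟨s, hsf, hss⟩ := (cauchy_iff.mp hf).2 _ hV
    have hSf : (S : Set A) ∈ f := Filter.le_principal_iff.mp hfS
    have hs'f : s ∩ (S : Set A) ∈ f := Filter.inter_mem hsf hSf
    obtain ⟨x, hxs, hxS⟩ := hf.1.nonempty_of_mem hs'f
    refine ⟨x, hxS, fun N hN => ?_⟩
    have hsingle : s ∩ (S : Set A) ⊆ {x} := by
      rintro y ⟨hys, hyS⟩
      have h1 : y - x ∈ W := hss (Set.mk_mem_prod hxs hys)
      have h2 : y - x ∈ S := S.sub_mem hyS hxS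
      have : y - x ∈ S ⊓ W := ⟨h2, h1⟩
      rw [hSW] at this
      simp only [Submodule.mem_bot, sub_eq_zero] at this
      simp [this]
    exact Filter.mem_of_superset hs'f fun y hy => by
      have := hsingle hy; simp only [Set.mem_singleton_iff] at this
      simpa [this] using mem_of_mem_nhds hN
  refine ⟨hcomplete.isClosed, hcomplete, fun U hU => ?_⟩
  have : FiniteDimensional k S := FiniteDimensional.span_of_finite k (Set.finite_singleton a)
  infer_instance

/-- Separation: a point outside a closed submodule is separated from it by a
continuous functional. -/
lemma exists_separating_functional (hA : IsLinearlyTopologized k A) {L : Submodule k A}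
    (hL : IsClosed (L : Set A)) {u : A} (hu : u ∉ L) :
    ∃ f : A →L[k] k, (∀ x ∈ L, f x = 0) ∧ f u ≠ 0 := by
  -- find an open submodule `W` with `(u + W) ∩ L = ∅`
  have hcompl : ((fun w : A => u + w) ⁻¹' (L : Set A)ᶜ) ∈ nhds (0 : A) := by
    have hcont : Continuous fun w : A => u + w := continuous_const.add continuous_id
    have hmem : ((L : Set A)ᶜ) ∈ nhds u := hL.isOpen_compl.mem_nhds hu
    have h := hcont.tendsto (0 : A)
    rw [add_zero] at h
    exact h hmem
  obtain ⟨W, hWopen, hWsub⟩ := hA.mem_iff.mp hcompl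
  set M := L ⊔ W with hM
  have huM : u ∉ M := by
    intro huM
    obtain ⟨l, hl, w, hw, hlw⟩ := Submodule.mem_sup.mp huM
    have : u + (-w) ∉ L := hWsub (W.neg_mem hw)
    apply this
    have : u + -w = l := by rw [← hlw]; abel
    rw [this]; exact hl
  obtain ⟨f, hfu, hfM⟩ := Submodule.exists_dual_map_eq_bot_of_notMem huM inferInstance
  have hker : ∀ x ∈ M, f x = 0 := by
    intro x hx
    have : f x ∈ Submodule.map f M := Submodule.mem_map_of_mem hx
    rw [hfM] at this
    simpa using this
  have hfc : Continuous f := by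
    apply continuous_of_continuousAt_zero f
    rw [ContinuousAt]
    intro N hN
    have h0N : (0 : k) ∈ N := by simpa using mem_of_mem_nhds hN
    rw [Filter.mem_map]
    refine Filter.mem_of_superset (hWopen.mem_nhds W.zero_mem) fun w hw => ?_
    have : f w = 0 := hker w (Submodule.mem_sup_right hw)
    simpa [this] using h0N
  exact ⟨⟨f, hfc⟩, fun x hx => hker x (Submodule.mem_sup_left hx), hfu⟩

/-- A uniform additive group with a complete open subgroup (here, submodule) is
complete. -/
lemma completeSpace_of_isComplete_open_submodule {U : Submodule k A}
    (hUopen : IsOpen (U : Set A)) (hUc : IsComplete (U : Set A)) : CompleteSpace A := by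
  constructor
  intro f hf
  have hV : {p : A × A | p.2 - p.1 ∈ U} ∈ uniformity A := by
    rw [uniformity_eq_comap_nhds_zero A]
    exact Filter.preimage_mem_comap (hUopen.mem_nhds U.zero_mem)
  obtain ⟨s, hsf, hss⟩ := (cauchy_iff.mp hf).2 _ hV
  obtain ⟨x, hxs⟩ := hf.1.nonempty_of_mem hsf
  have himg : IsComplete ((fun w : A => w + x) '' (U : Set A)) :=
    (isComplete_image_iff (isUniformEmbedding_translate_add x).isUniformInducing).2 hUc
  have hsub : s ⊆ (fun w : A => w + x) '' (U : Set A) := by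
    intro y hy
    exact ⟨y - x, hss (Set.mk_mem_prod hxs hy), by simp⟩
  have hmem : (fun w : A => w + x) '' (U : Set A) ∈ f := Filter.mem_of_superset hsf hsub
  obtain ⟨z, _, hz⟩ := himg f hf (Filter.le_principal_iff.mpr hmem)
  exact ⟨z, hz⟩

end Aux

/-- The evaluation map `A × A* → k` is continuous for the product topology (with `A*`
carrying its dual topology) if and only if `A` is a Tate vector space. -/
theorem evaluation_continuous_iff_tate
    {k : Type*} [Field k] [TopologicalSpace k] [DiscreteTopology k]
    {A : Type*} [AddCommGroup A] [Module k A] [UniformSpace A]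
    [IsUniformAddGroup A] [ContinuousSMul k A] [T2Space A]
    (hA : IsLinearlyTopologized k A)
    [TopologicalSpace (A →L[k] k)] [IsTopologicalAddGroup (A →L[k] k)]
    (hdual : IsDualTopology k (A := A)) :
    Continuous (fun p : A × (A →L[k] k) => p.2 p.1) ↔ IsTate k A := by
  constructor
  · -- continuity of evaluation implies Tate
    intro hcont
    have h0 : {p : A × (A →L[k] k) | p.2 p.1 = 0} ∈ nhds ((0 : A), (0 : A →L[k] k)) := by
      have h := hcont.tendsto ((0 : A), (0 : A →L[k] k))
      have hmem : ({0} : Set k) ∈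
          nhds ((fun p : A × (A →L[k] k) => p.2 p.1) ((0 : A), (0 : A →L[k] k))) := by
        rw [show (fun p : A × (A →L[k] k) => p.2 p.1) ((0 : A), (0 : A →L[k] k)) = 0
          by simp]
        exact (isOpen_discrete ({0} : Set k)).mem_nhds rfl
      have := h hmem
      rw [Filter.mem_map] at this
      exact this
    rw [nhds_prod_eq] at h0
    obtain ⟨⟨U, L⟩, ⟨hUopen, hLc⟩, hsub⟩ := (hA.prod hdual).mem_iff.mp h0
    -- every point of U lies in L
    have hUL : U ≤ L := by
      intro u hu
      by_contra huL
      obtain ⟨f, hfL, hfu⟩ := exists_separating_functional hA hLc.1 huL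
      exact hfu (hsub (Set.mk_mem_prod hu hfL))
    -- U is a c-lattice
    have hUclosed : IsClosed (U : Set A) := U.toAddSubgroup.isClosed_of_isOpen hUopen
    have hUcomplete : IsComplete (U : Set A) :=
      isComplete_of_isClosed_subset hLc.2.1 hUclosed hUL
    have hUbounded : LinearlyBounded k U := by
      intro W hW
      have hLW : FiniteDimensional k (↥L ⧸ (W.comap L.subtype)) := hLc.2.2 W hW
      let ι : U →ₗ[k] L := Submodule.inclusion hUL
      let φ : U →ₗ[k] (↥L ⧸ (W.comap L.subtype)) := (W.comap L.subtype).mkQ.comp ι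
      have hker : W.comap U.subtype ≤ LinearMap.ker φ := by
        intro x hx
        simp only [φ, LinearMap.mem_ker, LinearMap.comp_apply, Submodule.mkQ_apply,
          Submodule.Quotient.mk_eq_zero, Submodule.mem_comap]
        exact hx
      let ψ := (W.comap U.subtype).liftQ φ hker
      have hinj : Function.Injective ψ := by
        rw [← LinearMap.ker_eq_bot, Submodule.ker_liftQ_eq_bot']
        ext x
        simp only [φ, LinearMap.mem_ker, LinearMap.comp_apply, Submodule.mkQ_apply,
          Submodule.Quotient.mk_eq_zero, Submodule.mem_comap]
        rfl
      exact FiniteDimensional.of_injective ψ hinj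
    exact ⟨completeSpace_of_isComplete_open_submodule hUopen hUcomplete,
      U, hUopen, hUclosed, hUcomplete, hUbounded⟩
  · -- Tate implies continuity of evaluation
    rintro ⟨hcomp, L, hLopen, hLc⟩
    rw [continuous_iff_continuousAt]
    rintro ⟨a₀, f₀⟩
    rw [ContinuousAt, nhds_discrete k, Filter.tendsto_pure]
    rw [nhds_prod_eq]
    set S := Submodule.span k ({a₀} : Set A) with hS
    have hSc : LinearlyCompact k S := linearlyCompact_span_singleton hA a₀
    -- the neighborhood of a₀
    have hs : {a : A | a - a₀ ∈ L ∧ f₀ (a - a₀) = 0} ∈ nhds a₀ := by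
      have hcont : Continuous fun a : A => a - a₀ := continuous_id.sub continuous_const
      have hmem : ((L : Set A) ∩ (⇑f₀ ⁻¹' {0})) ∈ nhds (0 : A) := by
        refine Filter.inter_mem (hLopen.mem_nhds L.zero_mem) ?_
        exact (f₀.continuous.isOpen_preimage _ (isOpen_discrete ({0} : Set k))).mem_nhds
          (by simp)
      have h := hcont.tendsto a₀
      rw [sub_self] at h
      exact h hmem
    -- the neighborhood of f₀
    have ht : {f : A →L[k] k | (∀ x ∈ L, (f - f₀) x = 0) ∧ (∀ x ∈ S, (f - f₀) x = 0)} ∈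
        nhds f₀ := by
      have hcont : Continuous fun f : A →L[k] k => f - f₀ := continuous_id.sub continuous_const
      have hmem : ({g : A →L[k] k | ∀ x ∈ L, g x = 0} ∩
          {g : A →L[k] k | ∀ x ∈ S, g x = 0}) ∈ nhds (0 : A →L[k] k) :=
        Filter.inter_mem (hdual.mem_of_mem hLc) (hdual.mem_of_mem hSc)
      have h := hcont.tendsto f₀
      rw [sub_self] at h
      exact h hmem
    refine Filter.mem_of_superset (Filter.prod_mem_prod hs ht) ?_
    rintro ⟨a, f⟩ ⟨⟨haL, haf₀⟩, hfL, hfS⟩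
    simp only [Set.mem_setOf_eq]
    have h1 : (f - f₀) (a - a₀) = 0 := hfL _ haL
    have h2 : (f - f₀) a₀ = 0 := hfS _ (Submodule.mem_span_singleton_self a₀)
    have h3 : f₀ a = f₀ a₀ := by
      have := haf₀; rw [map_sub, sub_eq_zero] at this; exact this
    have h4 : f a₀ = f₀ a₀ := by
      rw [ContinuousLinearMap.sub_apply, sub_eq_zero] at h2; exact h2
    rw [ContinuousLinearMap.sub_apply, map_sub, map_sub] at h1
    have : f a - f a₀ - (f₀ a - f₀ a₀) = 0 := h1
    rw [h3, h4] at this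
    linear_combination this
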